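/- The social welfare optimization problem SWO has an optimal solution, and its optimal effective-resource vector is unique: there exists a feasible demand matrix maximizing u, and if q and q' are both feasible demand matrices maximizing u(q) = ∑_{i=1}^I u_i(x_i(q)) over feasible matrices, then x_i(q) = x_i(q') for every user i. -/

import Mathlib

/-- A demand matrix is feasible if it is componentwise nonnegative and the
demand to each provider equals its supply. -/
def Feasible {I J : ℕ} (Q : Fin J → ℝ) (q : Fin I → Fin J → ℝ) : Prop :=
  (∀ i j, 0 ≤ q i j) ∧ ∀ j, ∑ i, q i j = Q j

/-- The effective resource of user `i` under demand matrix `q`. -/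
def effRes {I J : ℕ} (c q : Fin I → Fin J → ℝ) (i : Fin I) : ℝ :=
  ∑ j, q i j * c i j

/-- The social welfare of a demand matrix. -/
def welfare {I J : ℕ} (u : Fin I → ℝ → ℝ) (c q : Fin I → Fin J → ℝ) : ℝ :=
  ∑ i, u i (effRes c q i)

lemma feasible_midpoint {I J : ℕ} (Q : Fin J → ℝ) (q q' : Fin I → Fin J → ℝ)
    (hq : Feasible Q q) (hq' : Feasible Q q') :
    Feasible Q (fun i j => (q i j + q' i j) / 2) := by
  constructor
  · intro i j
    have := hq.1 i j; have := hq'.1 i j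
    positivity
  · intro j
    have : ∑ i, (q i j + q' i j) / 2 = (∑ i, q i j + ∑ i, q' i j) / 2 := by
      rw [← Finset.sum_add_distrib, ← Finset.sum_div]
    rw [this, hq.2 j, hq'.2 j]; ring

lemma effRes_midpoint {I J : ℕ} (c q q' : Fin I → Fin J → ℝ) (i : Fin I) :
    effRes c (fun i j => (q i j + q' i j) / 2) i
      = (1/2 : ℝ) * effRes c q i + (1/2 : ℝ) * effRes c q' i := by
  unfold effRes
  rw [Finset.mul_sum, Finset.mul_sum, ← Finset.sum_add_distrib]
  exact Finset.sum_congr rfl fun j _ => by ring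

/-- The social welfare optimization problem SWO has an optimal
solution, and its optimal effective-resource vector is unique. -/
theorem swo_exists_and_effective_resource_unique
    (I J : ℕ) (hI : 0 < I) (hJ : 0 < J)
    (u : Fin I → ℝ → ℝ)
    (hu_diff : ∀ i, Differentiable ℝ (u i))
    (hu_mono : ∀ i, StrictMono (u i))
    (hu_conc : ∀ i, StrictConcaveOn ℝ Set.univ (u i))
    (Q : Fin J → ℝ) (hQ : ∀ j, 0 < Q j)
    (c : Fin I → Fin J → ℝ) (hc : ∀ i j, 0 < c i j) :
    (∃ q : Fin I → Fin J → ℝ, Feasible Q q ∧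
      ∀ q' : Fin I → Fin J → ℝ, Feasible Q q' → welfare u c q' ≤ welfare u c q) ∧
    (∀ q q' : Fin I → Fin J → ℝ, Feasible Q q → Feasible Q q' →
      (∀ r : Fin I → Fin J → ℝ, Feasible Q r → welfare u c r ≤ welfare u c q) →
      (∀ r : Fin I → Fin J → ℝ, Feasible Q r → welfare u c r ≤ welfare u c q') →
      ∀ i, effRes c q i = effRes c q' i) := by
  constructor
  · -- existence
    set S : Set (Fin I → Fin J → ℝ) := {q | Feasible Q q} with hS
    have hne : S.Nonempty := by
      refine ⟨fun i j => Q j / I, ⟨fun i j => div_nonneg (hQ j).le (Nat.cast_nonneg I), fun j => ?_⟩⟩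
      rw [Finset.sum_const, Finset.card_univ, Fintype.card_fin, nsmul_eq_mul]
      field_simp
    have hclosed : IsClosed S := by
      have h1 : IsClosed {q : Fin I → Fin J → ℝ | ∀ i j, 0 ≤ q i j} := by
        have : {q : Fin I → Fin J → ℝ | ∀ i j, 0 ≤ q i j}
            = ⋂ i, ⋂ j, {q | 0 ≤ q i j} := by ext q; simp
        rw [this]
        exact isClosed_iInter fun i => isClosed_iInter fun j =>
          isClosed_le continuous_const ((continuous_apply j).comp (continuous_apply i))
      have h2 : IsClosed {q : Fin I → Fin J → ℝ | ∀ j, ∑ i, q i j = Q j} := by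
        have : {q : Fin I → Fin J → ℝ | ∀ j, ∑ i, q i j = Q j}
            = ⋂ j, {q | ∑ i, q i j = Q j} := by ext q; simp
        rw [this]
        refine isClosed_iInter fun j => isClosed_eq ?_ continuous_const
        exact continuous_finset_sum _ fun i _ => (continuous_apply j).comp (continuous_apply i)
      have : S = {q : Fin I → Fin J → ℝ | ∀ i j, 0 ≤ q i j}
          ∩ {q | ∀ j, ∑ i, q i j = Q j} := by
        ext q; exact Iff.rfl
      rw [this]; exact h1.inter h2
    have hsub : S ⊆ Set.pi Set.univ (fun _ : Fin I =>
        Set.pi Set.univ (fun j : Fin J => Set.Icc (0:ℝ) (Q j))) := by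
      intro q hq i _ j _
      refine ⟨hq.1 i j, ?_⟩
      calc q i j ≤ ∑ i', q i' j :=
            Finset.single_le_sum (fun i' _ => hq.1 i' j) (Finset.mem_univ i)
        _ = Q j := hq.2 j
    have hcpt : IsCompact S := by
      refine IsCompact.of_isClosed_subset ?_ hclosed hsub
      exact isCompact_univ_pi fun i => isCompact_univ_pi fun j => isCompact_Icc
    have hcont : Continuous (welfare u c) := by
      unfold welfare effRes
      refine continuous_finset_sum _ fun i _ => ((hu_diff i).continuous).comp ?_
      exact continuous_finset_sum _ fun j _ =>
        (((continuous_apply j).comp (continuous_apply i) :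
          Continuous fun q : Fin I → Fin J → ℝ => q i j)).mul continuous_const
    obtain ⟨q, hqS, hmax⟩ := hcpt.exists_isMaxOn hne hcont.continuousOn
    exact ⟨q, hqS, fun q' hq' => hmax hq'⟩
  · -- uniqueness of effective resource vector
    intro q q' hq hq' hmax hmax' i
    by_contra hne
    set m : Fin I → Fin J → ℝ := fun i j => (q i j + q' i j) / 2 with hm
    have hmfeas : Feasible Q m := feasible_midpoint Q q q' hq hq'
    have heq : welfare u c q = welfare u c q' :=
      le_antisymm (hmax' q hq) (hmax q' hq')
    have hle : ∀ k : Fin I,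
        (1/2 : ℝ) * u k (effRes c q k) + (1/2 : ℝ) * u k (effRes c q' k)
          ≤ u k (effRes c m k) := by
      intro k
      rw [effRes_midpoint]
      have := (hu_conc k).concaveOn.2 (Set.mem_univ (effRes c q k))
        (Set.mem_univ (effRes c q' k)) (by norm_num : (0:ℝ) ≤ 1/2)
        (by norm_num : (0:ℝ) ≤ 1/2) (by norm_num)
      simpa using this
    have hlt : (1/2 : ℝ) * u i (effRes c q i) + (1/2 : ℝ) * u i (effRes c q' i)
        < u i (effRes c m i) := by
      rw [effRes_midpoint]
      have := (hu_conc i).2 (Set.mem_univ (effRes c q i))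
        (Set.mem_univ (effRes c q' i)) hne
        (by norm_num : (0:ℝ) < 1/2) (by norm_num : (0:ℝ) < 1/2) (by norm_num)
      simpa using this
    have hsum : welfare u c q < welfare u c m := by
      have : ∑ k, ((1/2 : ℝ) * u k (effRes c q k) + (1/2 : ℝ) * u k (effRes c q' k))
          < ∑ k, u k (effRes c m k) :=
        Finset.sum_lt_sum (fun k _ => hle k) ⟨i, Finset.mem_univ i, hlt⟩
      have hL : ∑ k, ((1/2 : ℝ) * u k (effRes c q k) + (1/2 : ℝ) * u k (effRes c q' k))
          = (1/2 : ℝ) * welfare u c q + (1/2 : ℝ) * welfare u c q' := by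
        unfold welfare
        rw [Finset.sum_add_distrib, ← Finset.mul_sum, ← Finset.mul_sum]
      rw [hL, ← heq] at this
      unfold welfare at this ⊢
      linarith
    exact absurd (hmax m hmfeas) (not_le.mpr hsum)
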